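/- Let I ⊆ ℝ be an open interval, c ∈ ℝ, f : ℝ → ℝ twice differentiable on I with f(t) > 0 on I, λ : ℝ → ℝ differentiable on I with λ(t) ≠ 0 on I, and μ : ℝ → ℝ a function on I. Assume that for all t ∈ I: μ(t)·λ(t) = f''(t)/f(t) and f(t)²λ(t)² = f'(t)² − c. Let θ : ℝ → ℝ be differentiable on I with tanh(θ(t)) = f'(t)/(f(t)·λ(t)) for all t ∈ I. Then θ'(t) = μ(t) for all t ∈ I. -/

import Mathlib

lemma tanh_hasDerivAt (x : ℝ) :
    HasDerivAt Real.tanh (1 - Real.tanh x ^ 2) x := by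
  have h := (Real.hasDerivAt_sinh x).div (Real.hasDerivAt_cosh x)
    (ne_of_gt (Real.cosh_pos x))
  have he : ∀ y : ℝ, Real.sinh y / Real.cosh y = Real.tanh y := fun y =>
    (Real.tanh_eq_sinh_div_cosh y).symm
  have h' : HasDerivAt Real.tanh
      ((Real.cosh x * Real.cosh x - Real.sinh x * Real.sinh x) / Real.cosh x ^ 2) x := by
    refine h.congr_deriv rfl |>.congr_of_eventuallyEq ?_
    filter_upwards with y using (he y).symm
  convert h' using 1
  have hc := Real.cosh_sq x
  have hcne : Real.cosh x ≠ 0 := ne_of_gt (Real.cosh_pos x)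
  rw [Real.tanh_eq_sinh_div_cosh]
  field_simp

lemma tanh_sq_lt_one (x : ℝ) : Real.tanh x ^ 2 < 1 := by
  rw [Real.tanh_eq_sinh_div_cosh, div_pow]
  rw [div_lt_one (by positivity)]
  nlinarith [Real.cosh_sq x]

/-- With `μ·λ = f''/f` and `f²λ² = f'² − c` on the open interval `I`
(`f > 0`, `λ ≠ 0`, `λ` differentiable), if `tanh θ = f'/(f·λ)`, then `θ' = μ` on `I`. -/
theorem stmt_14 (a b c : ℝ) (f f' f'' lam μ θ θ' : ℝ → ℝ)
    (hf : ∀ t ∈ Set.Ioo a b, HasDerivAt f (f' t) t)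
    (hf' : ∀ t ∈ Set.Ioo a b, HasDerivAt f' (f'' t) t)
    (hpos : ∀ t ∈ Set.Ioo a b, 0 < f t)
    (hlamdiff : ∀ t ∈ Set.Ioo a b, DifferentiableAt ℝ lam t)
    (hlam0 : ∀ t ∈ Set.Ioo a b, lam t ≠ 0)
    (hmul : ∀ t ∈ Set.Ioo a b, μ t * lam t = f'' t / f t)
    (hrel : ∀ t ∈ Set.Ioo a b, f t ^ 2 * lam t ^ 2 = f' t ^ 2 - c)
    (hθ : ∀ t ∈ Set.Ioo a b, HasDerivAt θ (θ' t) t)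
    (htanh : ∀ t ∈ Set.Ioo a b, Real.tanh (θ t) = f' t / (f t * lam t)) :
    ∀ t ∈ Set.Ioo a b, θ' t = μ t := by
  intro t ht
  have hI : Set.Ioo a b ∈ nhds t := (isOpen_Ioo).mem_nhds ht
  set g : ℝ → ℝ := fun s => f s * lam s with hg
  have hgt : g t ≠ 0 := mul_ne_zero (ne_of_gt (hpos t ht)) (hlam0 t ht)
  -- derivative of g at t
  set L := deriv lam t with hL
  have hlamd : HasDerivAt lam L t := (hlamdiff t ht).hasDerivAt
  have hgd : HasDerivAt g (f' t * lam t + f t * L) t := (hf t ht).mul hlamd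
  -- from the relation g² = f'² - c, get g·g' = f'·f''
  have hsq : HasDerivAt (fun s => g s ^ 2) (2 * g t * (f' t * lam t + f t * L)) t := by
    simpa [mul_comm, mul_assoc, mul_left_comm] using hgd.fun_pow 2
  have hsq' : HasDerivAt (fun s => f' s ^ 2 - c) (2 * f' t * f'' t) t := by
    simpa [mul_comm, mul_assoc, mul_left_comm] using ((hf' t ht).pow 2).sub_const c
  have heq : (fun s => g s ^ 2) =ᶠ[nhds t] (fun s => f' s ^ 2 - c) := by
    filter_upwards [hI] with s hs
    have := hrel s hs
    simp [hg, mul_pow]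
    linarith [hrel s hs]
  have hGG : 2 * g t * (f' t * lam t + f t * L) = 2 * f' t * f'' t := by
    have h1 := hsq.congr_of_eventuallyEq heq.symm
    exact h1.unique hsq'
  -- derivative of h = f'/g at t
  have hhd : HasDerivAt (fun s => f' s / g s)
      ((f'' t * g t - f' t * (f' t * lam t + f t * L)) / g t ^ 2) t :=
    (hf' t ht).div hgd hgt
  -- derivative of tanh ∘ θ at t
  have htd : HasDerivAt (fun s => Real.tanh (θ s)) ((1 - Real.tanh (θ t) ^ 2) * θ' t) t :=
    (tanh_hasDerivAt (θ t)).comp t (hθ t ht)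
  have heq2 : (fun s => Real.tanh (θ s)) =ᶠ[nhds t] (fun s => f' s / g s) := by
    filter_upwards [hI] with s hs
    exact htanh s hs
  have hkey : (1 - Real.tanh (θ t) ^ 2) * θ' t
      = (f'' t * g t - f' t * (f' t * lam t + f t * L)) / g t ^ 2 :=
    (htd.congr_of_eventuallyEq heq2.symm).unique hhd
  -- algebra
  have htv : Real.tanh (θ t) = f' t / g t := htanh t ht
  have hrelt : g t ^ 2 = f' t ^ 2 - c := by
    have := hrel t ht; simpa [hg, mul_pow] using this
  have hclt : c < 0 := by
    have h1 : Real.tanh (θ t) ^ 2 < 1 := tanh_sq_lt_one (θ t)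
    rw [htv, div_pow, div_lt_one (by positivity)] at h1
    nlinarith
  have hTg : Real.tanh (θ t) * g t = f' t := by
    rw [htv, div_mul_cancel₀ _ hgt]
  have hGg : g t * (f' t * lam t + f t * L) = f' t * f'' t := by
    linear_combination hGG / 2
  have hg2 : g t ^ 2 ≠ 0 := pow_ne_zero 2 hgt
  have h2 : (1 - Real.tanh (θ t) ^ 2) * θ' t * g t ^ 2
      = f'' t * g t - f' t * (f' t * lam t + f t * L) := by
    rw [hkey, div_mul_cancel₀ _ hg2]
  have hcne : c ≠ 0 := ne_of_lt hclt
  have hc2 : c * (θ' t * g t) = c * f'' t := by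
    linear_combination (θ' t * g t - f'' t) * hrelt
      - θ' t * g t * (Real.tanh (θ t) * g t + f' t) * hTg + f' t * hGg - g t * h2
  have hfin : θ' t * g t = f'' t := mul_left_cancel₀ hcne hc2
  have hmu : μ t = f'' t / g t := by
    have hm := hmul t ht
    have hfne : f t ≠ 0 := ne_of_gt (hpos t ht)
    have hm2 : μ t * lam t * f t = f'' t := by
      rw [hm, div_mul_cancel₀ _ hfne]
    rw [eq_div_iff hgt]
    simp only [hg]
    linear_combination hm2
  rw [hmu, eq_div_iff hgt]
  exact hfin
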